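/- For every full-rank lattice Λ in ℝ^n, there exists a basis B = {b_1,...,b_n} of Λ that is strongly reduced, i.e., (1) there exist linearly independent lattice vectors v_1,...,v_n with ‖v_i‖ = λ_i(Λ) such that writing v_i = Σ_j x_j^{(i)} b_j with x_j^{(i)} ∈ ℤ, one has x_i^{(i)} ≠ 0 and x_j^{(i)} = 0 for all j > i, and (2) for each i, ‖b_i‖ ≤ ‖b_i + Σ_{j<i} x_j b_j‖ for all integers x_j. -/

import Mathlib

open Finset
open scoped RealInnerProductSpace

noncomputable def latticeOf {n : ℕ} (b : Fin n → EuclideanSpace ℝ (Fin n)) :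
    AddSubgroup (EuclideanSpace ℝ (Fin n)) := AddSubgroup.closure (Set.range b)

/-- The `i`-th successive minimum of a lattice `L` (with `i ≥ 1`): the least `r ≥ 0`
such that the closed ball of radius `r` contains `i` linearly independent lattice vectors. -/
noncomputable def succMin {n : ℕ} (L : AddSubgroup (EuclideanSpace ℝ (Fin n))) (i : ℕ) : ℝ :=
  sInf {r : ℝ | 0 ≤ r ∧ ∃ v : Fin i → EuclideanSpace ℝ (Fin n),
    (∀ j, v j ∈ L) ∧ LinearIndependent ℝ v ∧ ∀ j, ‖v j‖ ≤ r}

/-- A basis `b` of the full-rank lattice it generates is *strongly reduced* if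
(1) there are linearly independent lattice vectors `v i` realizing the successive minima whose
integer coordinates over `b` have nonzero `i`-th coordinate and vanish beyond `i`, and
(2) each `b i` is shortest in its coset modulo the preceding basis vectors. -/
def StronglyReduced {n : ℕ} (b : Fin n → EuclideanSpace ℝ (Fin n)) : Prop :=
  (∃ v : Fin n → EuclideanSpace ℝ (Fin n), ∃ x : Fin n → Fin n → ℤ,
    LinearIndependent ℝ v ∧ (∀ i, v i ∈ latticeOf b) ∧
    (∀ i : Fin n, ‖v i‖ = succMin (latticeOf b) ((i : ℕ) + 1)) ∧
    (∀ i, v i = ∑ j, x i j • b j) ∧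
    (∀ i, x i i ≠ 0) ∧ (∀ i j, i < j → x i j = 0)) ∧
  (∀ i : Fin n, ∀ c : Fin n → ℤ,
    ‖b i‖ ≤ ‖b i + ∑ j ∈ Finset.univ.filter (· < i), c j • b j‖)

variable {n : ℕ}

def Vv (v : Fin n → EuclideanSpace ℝ (Fin n)) (m : ℕ) : Submodule ℝ (EuclideanSpace ℝ (Fin n)) :=
  Submodule.span ℝ (v '' {j : Fin n | (j : ℕ) < m})

lemma Vv_mono (v : Fin n → EuclideanSpace ℝ (Fin n)) {m m' : ℕ} (h : m ≤ m') : Vv v m ≤ Vv v m' :=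
  Submodule.span_mono (Set.image_mono (fun _ hj => lt_of_lt_of_le hj h))

lemma image_univ_lt {k : ℕ} (b : Fin k → EuclideanSpace ℝ (Fin n)) :
    b '' {j : Fin k | (j : ℕ) < k} = Set.range b := by
  have : {j : Fin k | (j : ℕ) < k} = Set.univ := by ext j; simp [j.isLt]
  rw [this, Set.image_univ]

lemma snoc_image_lt {k : ℕ} (v : Fin k → EuclideanSpace ℝ (Fin n)) (a : EuclideanSpace ℝ (Fin n))
    {m : ℕ} (hm : m ≤ k) :
    (Fin.snoc v a : Fin (k+1) → EuclideanSpace ℝ (Fin n)) '' {j : Fin (k+1) | (j : ℕ) < m}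
      = v '' {j : Fin k | (j : ℕ) < m} := by
  ext x
  constructor
  · rintro ⟨j, hj, rfl⟩
    have hjk : (j : ℕ) < k := lt_of_lt_of_le hj hm
    refine ⟨⟨j, hjk⟩, hj, ?_⟩
    have hcast : j = Fin.castSucc ⟨(j : ℕ), hjk⟩ := by
      apply Fin.ext; rfl
    conv_rhs => rw [hcast]
    rw [Fin.snoc_castSucc]
  · rintro ⟨j, hj, rfl⟩
    exact ⟨Fin.castSucc j, by simpa using hj, Fin.snoc_castSucc _ _ _⟩

lemma range_snoc' {k : ℕ} (v : Fin k → EuclideanSpace ℝ (Fin n)) (a : EuclideanSpace ℝ (Fin n)) :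
    Set.range (Fin.snoc v a : Fin (k+1) → EuclideanSpace ℝ (Fin n)) = insert a (Set.range v) := by
  ext x
  constructor
  · rintro ⟨j, rfl⟩
    cases j using Fin.lastCases with
    | last => rw [Fin.snoc_last]; exact Set.mem_insert _ _
    | cast j => rw [Fin.snoc_castSucc]; exact Set.mem_insert_of_mem _ (Set.mem_range_self j)
  · rintro (rfl | ⟨j, rfl⟩)
    · exact ⟨Fin.last k, Fin.snoc_last _ _⟩
    · exact ⟨Fin.castSucc j, Fin.snoc_castSucc _ _ _⟩

lemma lattice_ball_finite (B : Module.Basis (Fin n) ℝ (EuclideanSpace ℝ (Fin n))) (R : ℝ) :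
    {x : EuclideanSpace ℝ (Fin n) | x ∈ Submodule.span ℤ (Set.range ⇑B) ∧ ‖x‖ ≤ R}.Finite := by
  have hd : DiscreteTopology (Submodule.span ℤ (Set.range ⇑B)) := inferInstance
  have hc : IsClosed ((Submodule.span ℤ (Set.range ⇑B) : Submodule ℤ _) : Set (EuclideanSpace ℝ (Fin n))) :=
    AddSubgroup.isClosed_of_discrete (H := (Submodule.span ℤ (Set.range ⇑B)).toAddSubgroup)
  have heq : {x : EuclideanSpace ℝ (Fin n) | x ∈ Submodule.span ℤ (Set.range ⇑B) ∧ ‖x‖ ≤ R}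
      = ((Submodule.span ℤ (Set.range ⇑B) : Submodule ℤ _) : Set (EuclideanSpace ℝ (Fin n)))
        ∩ Metric.closedBall 0 R := by
    ext x; simp [mem_closedBall_zero_iff]
  rw [heq]
  have hcompact : IsCompact (((Submodule.span ℤ (Set.range ⇑B) : Submodule ℤ _) :
      Set (EuclideanSpace ℝ (Fin n))) ∩ Metric.closedBall 0 R) :=
    (isCompact_closedBall (0 : EuclideanSpace ℝ (Fin n)) R).inter_left hc
  exact hcompact.finite (isDiscrete_iff_discreteTopology.mpr (DiscreteTopology.of_subset hd Set.inter_subset_left))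

lemma exists_norm_min (B : Module.Basis (Fin n) ℝ (EuclideanSpace ℝ (Fin n)))
    (S : Set (EuclideanSpace ℝ (Fin n)))
    (hS : S ⊆ (Submodule.span ℤ (Set.range ⇑B) : Set (EuclideanSpace ℝ (Fin n))))
    (hne : S.Nonempty) :
    ∃ a ∈ S, ∀ x ∈ S, ‖a‖ ≤ ‖x‖ := by
  obtain ⟨u, hu⟩ := hne
  have hfin : (S ∩ {x | ‖x‖ ≤ ‖u‖}).Finite :=
    Set.Finite.subset (lattice_ball_finite B ‖u‖) (fun x hx => ⟨hS hx.1, hx.2⟩)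
  obtain ⟨a, ha, hmin⟩ := Set.exists_min_image _ norm hfin ⟨u, hu, by simp⟩
  refine ⟨a, ha.1, fun x hx => ?_⟩
  by_cases hxu : ‖x‖ ≤ ‖u‖
  · exact hmin x ⟨hx, hxu⟩
  · exact le_trans (hmin u ⟨hu, by simp⟩) (le_of_not_ge hxu)

lemma sum_castLE {k : ℕ} (hk : k ≤ n) (b : Fin n → EuclideanSpace ℝ (Fin n)) (g : Fin k → ℤ) :
    ∑ j : Fin k, g j • b (Fin.castLE hk j)
      = ∑ j : Fin n, (if h : (j : ℕ) < k then g ⟨(j : ℕ), h⟩ else 0) • b j := by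
  rw [← Finset.sum_filter_add_sum_filter_not Finset.univ (fun j : Fin n => (j : ℕ) < k)]
  have h2 : ∑ j ∈ Finset.univ.filter (fun j : Fin n => ¬ (j : ℕ) < k),
      (if h : (j : ℕ) < k then g ⟨(j : ℕ), h⟩ else 0) • b j = 0 := by
    apply Finset.sum_eq_zero
    intro j hj
    rw [Finset.mem_filter] at hj
    rw [dif_neg hj.2, zero_smul]
  rw [h2, add_zero]
  refine Finset.sum_bij (fun (a : Fin k) _ => Fin.castLE hk a) ?_ ?_ ?_ ?_
  · intro a _
    rw [Finset.mem_filter]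
    exact ⟨Finset.mem_univ _, a.isLt⟩
  · intro a _ a' _ hh
    exact Fin.castLE_injective hk hh
  · intro j hj
    rw [Finset.mem_filter] at hj
    exact ⟨⟨(j : ℕ), hj.2⟩, Finset.mem_univ _, by apply Fin.ext; rfl⟩
  · intro a _
    rw [dif_pos (show ((Fin.castLE hk a : Fin n) : ℕ) < k from a.isLt)]
    have : (⟨((Fin.castLE hk a : Fin n) : ℕ), a.isLt⟩ : Fin k) = a := by
      apply Fin.ext; rfl
    rw [this]

lemma exists_greedy (B : Module.Basis (Fin n) ℝ (EuclideanSpace ℝ (Fin n))) :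
    ∃ v : Fin n → EuclideanSpace ℝ (Fin n),
      (∀ j, v j ∈ Submodule.span ℤ (Set.range ⇑B)) ∧ LinearIndependent ℝ v ∧
      ∀ (j : Fin n) (w : EuclideanSpace ℝ (Fin n)), w ∈ Submodule.span ℤ (Set.range ⇑B) →
        w ∉ Submodule.span ℝ (v '' {l : Fin n | (l : ℕ) < (j : ℕ)}) → ‖v j‖ ≤ ‖w‖ := by
  suffices H : ∀ k, k ≤ n → ∃ v : Fin k → EuclideanSpace ℝ (Fin n),
      (∀ j, v j ∈ Submodule.span ℤ (Set.range ⇑B)) ∧ LinearIndependent ℝ v ∧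
      ∀ (j : Fin k) (w : EuclideanSpace ℝ (Fin n)), w ∈ Submodule.span ℤ (Set.range ⇑B) →
        w ∉ Submodule.span ℝ (v '' {l : Fin k | (l : ℕ) < (j : ℕ)}) → ‖v j‖ ≤ ‖w‖ by
    exact H n le_rfl
  intro k
  induction k with
  | zero =>
    exact fun _ => ⟨Fin.elim0, fun j => j.elim0, linearIndependent_empty_type, fun j => j.elim0⟩
  | succ k ih =>
    intro hk
    obtain ⟨v, hmem, hind, hmin⟩ := ih (Nat.le_of_succ_le hk)
    have hex : ∃ w, w ∈ Submodule.span ℤ (Set.range ⇑B) ∧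
        w ∉ Submodule.span ℝ (Set.range v) := by
      by_contra hcon
      push_neg at hcon
      have htop : (⊤ : Submodule ℝ (EuclideanSpace ℝ (Fin n))) ≤
          Submodule.span ℝ (Set.range v) := by
        rw [← B.span_eq]
        rw [Submodule.span_le]
        rintro x ⟨j, rfl⟩
        exact hcon _ (Submodule.subset_span (Set.mem_range_self j))
      have h1 : (n : ℕ) ≤ k := by
        have := Submodule.finrank_mono htop
        rw [finrank_top] at this
        simp only [finrank_euclideanSpace_fin] at this
        have h2 := finrank_range_le_card (R := ℝ) v
        rw [Set.finrank] at h2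
        simpa using le_trans this h2
      omega
    obtain ⟨a, ⟨haL, hanot⟩, hamin⟩ := exists_norm_min B
      {x | x ∈ Submodule.span ℤ (Set.range ⇑B) ∧ x ∉ Submodule.span ℝ (Set.range v)}
      (fun x hx => hx.1) ⟨hex.choose, hex.choose_spec⟩
    refine ⟨Fin.snoc v a, ?_, ?_, ?_⟩
    · intro j
      cases j using Fin.lastCases with
      | last => rw [Fin.snoc_last]; exact haL
      | cast j => rw [Fin.snoc_castSucc]; exact hmem j
    · exact linearIndependent_fin_snoc.mpr ⟨hind, hanot⟩
    · intro j w hwL hwnot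
      cases j using Fin.lastCases with
      | last =>
        rw [Fin.snoc_last]
        refine hamin w ⟨hwL, ?_⟩
        intro hw
        apply hwnot
        have : (Fin.snoc v a : Fin (k+1) → EuclideanSpace ℝ (Fin n)) ''
            {l : Fin (k+1) | (l : ℕ) < (Fin.last k : ℕ)} = Set.range v := by
          rw [Fin.val_last, snoc_image_lt v a le_rfl, image_univ_lt v]
        rw [this]
        exact hw
      | cast j =>
        rw [Fin.snoc_castSucc]
        refine hmin j w hwL ?_
        intro hw
        apply hwnot
        have : (Fin.snoc v a : Fin (k+1) → EuclideanSpace ℝ (Fin n)) ''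
            {l : Fin (k+1) | (l : ℕ) < ((Fin.castSucc j : Fin (k+1)) : ℕ)}
            = v '' {l : Fin k | (l : ℕ) < (j : ℕ)} := by
          rw [Fin.coe_castSucc, snoc_image_lt v a (le_of_lt j.isLt)]
        rw [this]
        exact hw

lemma greedy_norm_eq_succMin (B : Module.Basis (Fin n) ℝ (EuclideanSpace ℝ (Fin n)))
    (v : Fin n → EuclideanSpace ℝ (Fin n))
    (hmem : ∀ j, v j ∈ Submodule.span ℤ (Set.range ⇑B))
    (hind : LinearIndependent ℝ v)
    (hmin : ∀ (j : Fin n) (w : EuclideanSpace ℝ (Fin n)),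
      w ∈ Submodule.span ℤ (Set.range ⇑B) →
      w ∉ Submodule.span ℝ (v '' {l : Fin n | (l : ℕ) < (j : ℕ)}) → ‖v j‖ ≤ ‖w‖)
    (i : Fin n) :
    ‖v i‖ = succMin (Submodule.span ℤ (Set.range ⇑B)).toAddSubgroup ((i : ℕ) + 1) := by
  have hmono : ∀ j i : Fin n, (j : ℕ) ≤ (i : ℕ) → ‖v j‖ ≤ ‖v i‖ := by
    intro j i hji
    refine hmin j (v i) (hmem i) ?_
    exact hind.notMem_span_image (by simp; omega)
  have hi1 : (i : ℕ) + 1 ≤ n := i.isLt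
  have hmemset : ‖v i‖ ∈ {r : ℝ | 0 ≤ r ∧ ∃ w : Fin ((i : ℕ) + 1) → EuclideanSpace ℝ (Fin n),
      (∀ j, w j ∈ (Submodule.span ℤ (Set.range ⇑B)).toAddSubgroup) ∧ LinearIndependent ℝ w ∧
      ∀ j, ‖w j‖ ≤ r} := by
    refine ⟨norm_nonneg _, fun j => v (Fin.castLE hi1 j), ?_, ?_, ?_⟩
    · intro j; exact hmem _
    · exact hind.comp _ (Fin.castLE_injective hi1)
    · intro j
      exact hmono _ i (by have := j.isLt; simp [Fin.castLE]; omega)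
  rw [succMin]
  refine le_antisymm ?_ ?_
  · -- lower bound: ‖v i‖ ≤ sInf
    apply le_csInf ⟨‖v i‖, hmemset⟩
    rintro r ⟨hr0, w, hwL, hwind, hwle⟩
    have hexj : ∃ j, w j ∉ Submodule.span ℝ (v '' {l : Fin n | (l : ℕ) < (i : ℕ)}) := by
      by_contra hcon
      push_neg at hcon
      set U := Submodule.span ℝ (v '' {l : Fin n | (l : ℕ) < (i : ℕ)}) with hU
      have hard : Module.finrank ℝ U ≤ (i : ℕ) := by
        have himg : v '' {l : Fin n | (l : ℕ) < (i : ℕ)}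
            = Set.range (v ∘ Fin.castLE (le_of_lt i.isLt)) := by
          rw [Set.range_comp, Fin.range_castLE]
        rw [hU, himg]
        have h2 := finrank_range_le_card (R := ℝ) (v ∘ Fin.castLE (le_of_lt i.isLt))
        rw [Set.finrank] at h2
        simpa using h2
      have hwU : LinearIndependent ℝ (fun j => (⟨w j, hcon j⟩ : U)) := by
        apply LinearIndependent.of_comp U.subtype
        convert hwind
        rfl
      have hcard := hwU.fintype_card_le_finrank
      rw [Fintype.card_fin] at hcard
      omega
    obtain ⟨j, hj⟩ := hexj
    calc ‖v i‖ ≤ ‖w j‖ := hmin i (w j) (hwL j) hj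
    _ ≤ r := hwle j
  · exact csInf_le ⟨0, fun r hr => hr.1⟩ hmemset

lemma step_lemma (B : Module.Basis (Fin n) ℝ (EuclideanSpace ℝ (Fin n)))
    (v : Fin n → EuclideanSpace ℝ (Fin n))
    (hvL : ∀ j, v j ∈ Submodule.span ℤ (Set.range ⇑B))
    (hvind : LinearIndependent ℝ v)
    {k : ℕ} (hkn : k < n) (b : Fin k → EuclideanSpace ℝ (Fin n))
    (hM : Submodule.span ℤ (Set.range b)
      = Submodule.span ℤ (Set.range ⇑B) ⊓ (Vv v k).restrictScalars ℤ)
    (hU : Submodule.span ℝ (Set.range b) = Vv v k) :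
    ∃ bi, bi ∈ Submodule.span ℤ (Set.range ⇑B) ∧ bi ∈ Vv v (k+1) ∧ bi ∉ Vv v k ∧
      (∀ w ∈ Submodule.span ℤ (Set.range b), ‖bi‖ ≤ ‖bi + w‖) ∧
      (∀ w, w ∈ Submodule.span ℤ (Set.range ⇑B) → w ∈ Vv v (k+1) →
        ∃ q : ℤ, w - q • bi ∈ Submodule.span ℤ (Set.range b)) := by
  have hviL : v ⟨k, hkn⟩ ∈ Submodule.span ℤ (Set.range ⇑B) := hvL _
  have hviV : v ⟨k, hkn⟩ ∈ Vv v (k+1) := Submodule.subset_span ⟨⟨k, hkn⟩, by simp, rfl⟩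
  have hvinot : v ⟨k, hkn⟩ ∉ Vv v k := hvind.notMem_span_image (by simp)
  set vi := v ⟨k, hkn⟩ with hvidef
  set p : EuclideanSpace ℝ (Fin n) := (Vv v k).starProjection vi
    with hpdef
  set u := vi - p with hudef
  have hpV : p ∈ Vv v k := (Vv v k).starProjection_apply_mem vi
  have huorth : ∀ x ∈ Vv v k, ⟪u, x⟫ = 0 := by
    have h1 : u ∈ (Vv v k)ᗮ := (Vv v k).sub_starProjection_mem_orthogonal vi
    intro x hx
    rw [real_inner_comm]
    exact (Submodule.mem_orthogonal _ _).mp h1 x hx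
  have hviup : vi = u + p := by rw [hudef]; abel
  have hfvi : ⟪u, vi⟫ = ‖u‖ ^ 2 := by
    conv_lhs => rw [hviup]
    rw [inner_add_right, huorth p hpV, real_inner_self_eq_norm_sq, add_zero]
  have hune : u ≠ 0 := by
    intro h0
    apply hvinot
    have : vi = p := by rw [hviup, h0, zero_add]
    rw [this]; exact hpV
  have hfvipos : 0 < ⟪u, vi⟫ := by
    rw [hfvi]
    exact pow_pos (norm_pos_iff.mpr hune) 2
  -- decomposition of elements of Vv v (k+1)
  have hdec : ∀ w ∈ Vv v (k+1), ∃ x ∈ Vv v k, ∃ t : ℝ, w = x + t • vi := by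
    have hins : {j : Fin n | (j : ℕ) < k+1} = insert (⟨k, hkn⟩ : Fin n) {j : Fin n | (j : ℕ) < k} := by
      ext j; simp [Fin.ext_iff]; omega
    intro w hw
    rw [Vv, hins, Set.image_insert_eq, Submodule.span_insert] at hw
    obtain ⟨y, hy, z, hz, rfl⟩ := Submodule.mem_sup.mp hw
    obtain ⟨t, rfl⟩ := Submodule.mem_span_singleton.mp hy
    exact ⟨z, hz, t, add_comm _ _⟩
  have hfdec : ∀ (x : EuclideanSpace ℝ (Fin n)) (t : ℝ), x ∈ Vv v k →
      ⟪u, x + t • vi⟫ = t * ⟪u, vi⟫ := by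
    intro x t hx
    rw [inner_add_right, huorth x hx, real_inner_smul_right, zero_add]
  have hMleL : Submodule.span ℤ (Set.range b) ≤ Submodule.span ℤ (Set.range ⇑B) := by
    rw [hM]; exact inf_le_left
  have hMleV : ∀ x ∈ Submodule.span ℤ (Set.range b), x ∈ Vv v k := by
    intro x hx; rw [hM] at hx; exact hx.2
  set R := (∑ j : Fin k, ‖b j‖) + ‖vi‖ with hRdef
  -- reduction modulo the sublattice spanned by b
  have hreduce : ∀ w, w ∈ Submodule.span ℤ (Set.range ⇑B) → w ∈ Vv v (k+1) →
      0 ≤ ⟪u, w⟫ → ⟪u, w⟫ ≤ ⟪u, vi⟫ →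
      ∃ w', w' ∈ Submodule.span ℤ (Set.range ⇑B) ∧ w' ∈ Vv v (k+1) ∧ ⟪u, w'⟫ = ⟪u, w⟫ ∧
        w - w' ∈ Submodule.span ℤ (Set.range b) ∧ ‖w'‖ ≤ R := by
    intro w hwL hwV hf0 hf1
    obtain ⟨x, hx, t, rfl⟩ := hdec w hwV
    have hfw : ⟪u, x + t • vi⟫ = t * ⟪u, vi⟫ := hfdec x t hx
    rw [hfw] at hf0 hf1
    have ht0 : 0 ≤ t := by nlinarith
    have ht1 : t ≤ 1 := by nlinarith
    obtain ⟨c, hc⟩ := (Submodule.mem_span_range_iff_exists_fun ℝ).mp (by rw [hU]; exact hx)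
    have hu0M : (∑ j : Fin k, (round (c j) : ℤ) • b j) ∈ Submodule.span ℤ (Set.range b) :=
      Submodule.sum_mem _ fun j _ =>
        Submodule.smul_mem _ _ (Submodule.subset_span (Set.mem_range_self j))
    refine ⟨x + t • vi - ∑ j : Fin k, (round (c j) : ℤ) • b j, ?_, ?_, ?_, ?_, ?_⟩
    · exact sub_mem hwL (hMleL hu0M)
    · exact sub_mem hwV (Vv_mono v (Nat.le_succ k) (hMleV _ hu0M))
    · rw [inner_sub_right, huorth _ (hMleV _ hu0M), sub_zero]
    · simpa using hu0M
    · have hxu0 : x - (∑ j : Fin k, (round (c j) : ℤ) • b j)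
          = ∑ j : Fin k, (c j - (round (c j) : ℝ)) • b j := by
        rw [← hc]
        rw [← Finset.sum_sub_distrib]
        congr 1
        ext j
        rw [sub_smul, Int.cast_smul_eq_zsmul]
      have h1 : x + t • vi - (∑ j : Fin k, (round (c j) : ℤ) • b j)
          = (x - (∑ j : Fin k, (round (c j) : ℤ) • b j)) + t • vi := by abel
      rw [h1, hxu0]
      refine le_trans (norm_add_le _ _) ?_
      rw [hRdef]
      gcongr
      · refine le_trans (norm_sum_le _ _) ?_
        apply Finset.sum_le_sum
        intro j _
        rw [norm_smul]
        apply mul_le_of_le_one_left (norm_nonneg _)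
        rw [Real.norm_eq_abs]
        calc |c j - (round (c j) : ℝ)| ≤ 1/2 := abs_sub_round (c j)
        _ ≤ 1 := by norm_num
      · rw [norm_smul, Real.norm_eq_abs]
        apply mul_le_of_le_one_left (norm_nonneg _)
        rw [abs_of_nonneg ht0]; exact ht1
  -- finite candidate set and minimal positive inner value
  set C := {x : EuclideanSpace ℝ (Fin n) | x ∈ Submodule.span ℤ (Set.range ⇑B) ∧ x ∈ Vv v (k+1) ∧
    0 < ⟪u, x⟫ ∧ ⟪u, x⟫ ≤ ⟪u, vi⟫ ∧ ‖x‖ ≤ R} with hCdef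
  have hCfin : C.Finite :=
    (lattice_ball_finite B R).subset (fun x hx => ⟨hx.1, hx.2.2.2.2⟩)
  have hCne : C.Nonempty := by
    obtain ⟨w', h1, h2, h3, h4, h5⟩ := hreduce vi hviL hviV (le_of_lt hfvipos) le_rfl
    exact ⟨w', h1, h2, by rw [h3]; exact hfvipos, by rw [h3], h5⟩
  obtain ⟨a, haC, hamin⟩ := Set.exists_min_image C (fun x => ⟪u, x⟫) hCfin hCne
  have hma : 0 < ⟪u, a⟫ := haC.2.2.1
  have hdiv : ∀ w, w ∈ Submodule.span ℤ (Set.range ⇑B) → w ∈ Vv v (k+1) →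
      ∃ q : ℤ, w - q • a ∈ Submodule.span ℤ (Set.range b) := by
    intro w hwL hwV
    refine ⟨⌊⟪u, w⟫ / ⟪u, a⟫⌋, ?_⟩
    set q : ℤ := ⌊⟪u, w⟫ / ⟪u, a⟫⌋ with hqdef
    have hw'L : w - q • a ∈ Submodule.span ℤ (Set.range ⇑B) := sub_mem hwL (zsmul_mem haC.1 q)
    have hw'V : w - q • a ∈ Vv v (k+1) := sub_mem hwV (zsmul_mem haC.2.1 q)
    have hfw' : ⟪u, w - q • a⟫ = ⟪u, w⟫ - (q : ℝ) * ⟪u, a⟫ := by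
      rw [inner_sub_right]
      congr 1
      rw [← Int.cast_smul_eq_zsmul ℝ, real_inner_smul_right]
    have hfloor1 : (q : ℝ) ≤ ⟪u, w⟫ / ⟪u, a⟫ := Int.floor_le _
    have hfloor2 : ⟪u, w⟫ / ⟪u, a⟫ < (q : ℝ) + 1 := Int.lt_floor_add_one _
    have h0le : 0 ≤ ⟪u, w - q • a⟫ := by
      rw [hfw']
      have := (mul_le_mul_of_nonneg_right hfloor1 (le_of_lt hma))
      rw [div_mul_cancel₀ _ (ne_of_gt hma)] at this
      linarith
    have hlt : ⟪u, w - q • a⟫ < ⟪u, a⟫ := by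
      rw [hfw']
      have := (mul_lt_mul_of_pos_right hfloor2 hma)
      rw [div_mul_cancel₀ _ (ne_of_gt hma)] at this
      nlinarith
    rcases eq_or_lt_of_le h0le with heq | hpos
    · obtain ⟨x, hx, t, hxt⟩ := hdec _ hw'V
      have ht : t * ⟪u, vi⟫ = 0 := by
        rw [← hfdec x t hx, ← hxt, ← heq]
      have ht0 : t = 0 := by
        rcases mul_eq_zero.mp ht with h | h
        · exact h
        · exact absurd h (ne_of_gt hfvipos)
      have hxw : w - q • a = x := by rw [hxt, ht0, zero_smul, add_zero]
      rw [hM]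
      refine ⟨hw'L, ?_⟩
      show w - q • a ∈ Vv v k
      rw [hxw]
      exact hx
    · exfalso
      obtain ⟨w'', h1, h2, h3, h4, h5⟩ := hreduce (w - q • a) hw'L hw'V (le_of_lt hpos)
        (le_trans (le_of_lt hlt) haC.2.2.2.1)
      have hw''C : w'' ∈ C := ⟨h1, h2, by rw [h3]; exact hpos,
        by rw [h3]; exact le_trans (le_of_lt hlt) haC.2.2.2.1, h5⟩
      have := hamin w'' hw''C
      rw [h3] at this
      linarith
  -- minimize the norm over the coset a + span ℤ (range b)
  obtain ⟨bi, hbiS, hbimin⟩ := exists_norm_min B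
    {x | ∃ m ∈ Submodule.span ℤ (Set.range b), x = a + m}
    (by rintro x ⟨m, hm, rfl⟩; exact add_mem haC.1 (hMleL hm))
    ⟨a, 0, zero_mem _, (add_zero a).symm⟩
  obtain ⟨m0, hm0, rfl⟩ := hbiS
  have hdiv' : ∀ w, w ∈ Submodule.span ℤ (Set.range ⇑B) → w ∈ Vv v (k+1) →
      ∃ q : ℤ, w - q • (a + m0) ∈ Submodule.span ℤ (Set.range b) := by
    intro w hwL hwV
    obtain ⟨q, hq⟩ := hdiv w hwL hwV
    refine ⟨q, ?_⟩
    have : w - q • (a + m0) = (w - q • a) - q • m0 := by rw [smul_add]; abel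
    rw [this]
    exact sub_mem hq (zsmul_mem hm0 q)
  refine ⟨a + m0, ?_, ?_, ?_, ?_, hdiv'⟩
  · exact add_mem haC.1 (hMleL hm0)
  · exact add_mem haC.2.1 (Vv_mono v (Nat.le_succ k) (hMleV _ hm0))
  · intro hbiVk
    obtain ⟨q, hq⟩ := hdiv' vi hviL hviV
    apply hvinot
    have : vi = (vi - q • (a + m0)) + q • (a + m0) := by abel
    rw [this]
    exact add_mem (hMleV _ hq) (zsmul_mem hbiVk q)
  · intro w hw
    exact hbimin (a + m0 + w) ⟨m0 + w, add_mem hm0 hw, by rw [add_assoc]⟩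

lemma exists_adapted (B : Module.Basis (Fin n) ℝ (EuclideanSpace ℝ (Fin n)))
    (v : Fin n → EuclideanSpace ℝ (Fin n))
    (hvL : ∀ j, v j ∈ Submodule.span ℤ (Set.range ⇑B))
    (hvind : LinearIndependent ℝ v) :
    ∃ b : Fin n → EuclideanSpace ℝ (Fin n), LinearIndependent ℝ b ∧
      (∀ m, m ≤ n → Submodule.span ℤ (b '' {j : Fin n | (j : ℕ) < m})
        = Submodule.span ℤ (Set.range ⇑B) ⊓ (Vv v m).restrictScalars ℤ) ∧
      (∀ j : Fin n, ∀ w ∈ Submodule.span ℤ (b '' {l : Fin n | (l : ℕ) < (j : ℕ)}),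
        ‖b j‖ ≤ ‖b j + w‖) := by
  suffices H : ∀ k, k ≤ n → ∃ b : Fin k → EuclideanSpace ℝ (Fin n), LinearIndependent ℝ b ∧
      (∀ m, m ≤ k → Submodule.span ℤ (b '' {j : Fin k | (j : ℕ) < m})
        = Submodule.span ℤ (Set.range ⇑B) ⊓ (Vv v m).restrictScalars ℤ) ∧
      (∀ j : Fin k, ∀ w ∈ Submodule.span ℤ (b '' {l : Fin k | (l : ℕ) < (j : ℕ)}),
        ‖b j‖ ≤ ‖b j + w‖) by
    exact H n le_rfl
  intro k
  induction k with
  | zero =>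
    intro _
    refine ⟨Fin.elim0, linearIndependent_empty_type, ?_, fun j => j.elim0⟩
    intro m hm
    have hm0 : m = 0 := Nat.le_zero.mp hm
    subst hm0
    have h1 : (Fin.elim0 : Fin 0 → EuclideanSpace ℝ (Fin n)) '' {j : Fin 0 | (j : ℕ) < 0}
        = (∅ : Set (EuclideanSpace ℝ (Fin n))) := by
      simp
    have h2 : Vv v 0 = ⊥ := by
      rw [Vv]
      have : v '' {j : Fin n | (j : ℕ) < 0} = ∅ := by simp
      rw [this, Submodule.span_empty]
    rw [h1, h2, Submodule.span_empty, Submodule.restrictScalars_bot, inf_bot_eq]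
  | succ k ih =>
    intro hk
    have hkn : k < n := hk
    obtain ⟨b, hind, hspan, hmin⟩ := ih (Nat.le_of_succ_le hk)
    have hM : Submodule.span ℤ (Set.range b)
        = Submodule.span ℤ (Set.range ⇑B) ⊓ (Vv v k).restrictScalars ℤ := by
      have h := hspan k le_rfl
      rwa [image_univ_lt] at h
    have hMleV : ∀ x ∈ Submodule.span ℤ (Set.range b), x ∈ Vv v k := by
      intro x hx; rw [hM] at hx; exact hx.2
    have hU : Submodule.span ℝ (Set.range b) = Vv v k := by
      have hle : Submodule.span ℝ (Set.range b) ≤ Vv v k := by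
        rw [Submodule.span_le]
        rintro x ⟨j, rfl⟩
        exact hMleV _ (Submodule.subset_span (Set.mem_range_self j))
      have hf1 : Module.finrank ℝ (Submodule.span ℝ (Set.range b)) = k := by
        rw [finrank_span_eq_card hind, Fintype.card_fin]
      have hf2 : Module.finrank ℝ (Vv v k) = k := by
        have himg : v '' {l : Fin n | (l : ℕ) < k} = Set.range (v ∘ Fin.castLE hkn.le) := by
          rw [Set.range_comp, Fin.range_castLE]
        rw [Vv, himg, finrank_span_eq_card (hvind.comp _ (Fin.castLE_injective hkn.le)),
          Fintype.card_fin]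
      exact Submodule.eq_of_le_of_finrank_le hle (by rw [hf1, hf2])
    obtain ⟨bi, hbiL, hbiV, hbinot, hbimin, hdiv⟩ := step_lemma B v hvL hvind hkn b hM hU
    refine ⟨Fin.snoc b bi, ?_, ?_, ?_⟩
    · exact linearIndependent_fin_snoc.mpr ⟨hind, by rw [hU]; exact hbinot⟩
    · intro m hm
      by_cases hmk : m ≤ k
      · rw [snoc_image_lt b bi hmk]
        exact hspan m hmk
      · have hmeq : m = k + 1 := by omega
        subst hmeq
        rw [image_univ_lt (Fin.snoc b bi), range_snoc', Submodule.span_insert]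
        apply le_antisymm
        · apply sup_le
          · rw [Submodule.span_singleton_le_iff_mem]
            exact ⟨hbiL, hbiV⟩
          · rw [hM]
            rintro x ⟨h1, h2⟩
            exact ⟨h1, Vv_mono v (Nat.le_succ k) h2⟩
        · rintro w ⟨hw1, hw2⟩
          obtain ⟨q, hq⟩ := hdiv w hw1 hw2
          have hw : w = q • bi + (w - q • bi) := by abel
          rw [hw]
          exact add_mem
            (Submodule.mem_sup_left (zsmul_mem (Submodule.mem_span_singleton_self bi) q))
            (Submodule.mem_sup_right hq)
    · intro j w hw
      cases j using Fin.lastCases with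
      | last =>
        have h1 : ((Fin.snoc b bi : Fin (k+1) → EuclideanSpace ℝ (Fin n)) ''
            {l : Fin (k+1) | (l : ℕ) < ((Fin.last k : Fin (k+1)) : ℕ)}) = Set.range b := by
          rw [Fin.val_last, snoc_image_lt b bi le_rfl, image_univ_lt]
        rw [h1] at hw
        rw [Fin.snoc_last]
        exact hbimin w hw
      | cast j =>
        have h1 : ((Fin.snoc b bi : Fin (k+1) → EuclideanSpace ℝ (Fin n)) ''
            {l : Fin (k+1) | (l : ℕ) < ((Fin.castSucc j : Fin (k+1)) : ℕ)})
            = b '' {l : Fin k | (l : ℕ) < (j : ℕ)} := by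
          rw [Fin.coe_castSucc, snoc_image_lt b bi (le_of_lt j.isLt)]
        rw [h1] at hw
        rw [Fin.snoc_castSucc]
        exact hmin j w hw

theorem exists_stronglyReduced_basis {n : ℕ} (b0 : Fin n → EuclideanSpace ℝ (Fin n))
    (h : LinearIndependent ℝ b0) :
    ∃ b : Fin n → EuclideanSpace ℝ (Fin n), LinearIndependent ℝ b ∧
      latticeOf b = latticeOf b0 ∧ StronglyReduced b := by
  rcases Nat.eq_zero_or_pos n with hn | hn
  · subst hn
    refine ⟨b0, h, rfl, ?_, ?_⟩
    · exact ⟨Fin.elim0, fun i => i.elim0, linearIndependent_empty_type,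
        fun i => i.elim0, fun i => i.elim0, fun i => i.elim0, fun i => i.elim0,
        fun i => i.elim0⟩
    · exact fun i => i.elim0
  have : Nonempty (Fin n) := Fin.pos_iff_nonempty.mp hn
  set B : Module.Basis (Fin n) ℝ (EuclideanSpace ℝ (Fin n)) :=
    basisOfLinearIndependentOfCardEqFinrank h (by simp) with hBdef
  have hB : ⇑B = b0 := coe_basisOfLinearIndependentOfCardEqFinrank h _
  obtain ⟨v, hvL, hvind, hvmin⟩ := exists_greedy B
  have hvsm := greedy_norm_eq_succMin B v hvL hvind hvmin
  obtain ⟨b, hbind, hbspan, hbmin⟩ := exists_adapted B v hvL hvind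
  have hVtop : Vv v n = ⊤ := by
    rw [Vv, image_univ_lt v]
    apply hvind.span_eq_top_of_card_eq_finrank
    simp
  have hspan_all : Submodule.span ℤ (Set.range b) = Submodule.span ℤ (Set.range ⇑B) := by
    have hh := hbspan n le_rfl
    rw [image_univ_lt b] at hh
    rw [hh, hVtop]
    simp
  have hlatB : latticeOf b0 = (Submodule.span ℤ (Set.range ⇑B)).toAddSubgroup := by
    rw [hB, Submodule.span_int_eq_addSubgroupClosure]
    rfl
  have hlat : latticeOf b = latticeOf b0 := by
    rw [hlatB, latticeOf, ← Submodule.span_int_eq_addSubgroupClosure, hspan_all]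
  have hbjV : ∀ j : Fin n, b j ∈ Vv v ((j : ℕ) + 1) := by
    intro j
    have hj : b j ∈ Submodule.span ℤ (b '' {l : Fin n | (l : ℕ) < (j : ℕ) + 1}) :=
      Submodule.subset_span ⟨j, by simp, rfl⟩
    rw [hbspan _ j.isLt] at hj
    exact hj.2
  refine ⟨b, hbind, hlat, ?_, ?_⟩
  · -- part 1
    have hc : ∀ i : Fin n, ∃ c : Fin ((i : ℕ) + 1) → ℤ,
        ∑ j, c j • b (Fin.castLE i.isLt j) = v i := by
      intro i
      have h1 : v i ∈ Submodule.span ℤ (b '' {l : Fin n | (l : ℕ) < (i : ℕ) + 1}) := by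
        rw [hbspan _ i.isLt]
        exact ⟨hvL i, Submodule.subset_span ⟨i, by simp, rfl⟩⟩
      have h2 : b '' {l : Fin n | (l : ℕ) < (i : ℕ) + 1}
          = Set.range (b ∘ Fin.castLE i.isLt) := by
        rw [Set.range_comp, Fin.range_castLE]
      rw [h2] at h1
      exact (Submodule.mem_span_range_iff_exists_fun ℤ).mp h1
    choose c hc using hc
    refine ⟨v, fun i j => if hj : (j : ℕ) < (i : ℕ) + 1 then c i ⟨(j : ℕ), hj⟩ else 0,
      hvind, ?_, ?_, ?_, ?_, ?_⟩
    · intro i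
      rw [hlat, hlatB]
      exact hvL i
    · intro i
      rw [hlat, hlatB]
      exact hvsm i
    · intro i
      rw [← hc i, sum_castLE i.isLt b (c i)]
    · -- x i i ≠ 0
      intro i h0
      have hviV : v i ∈ Vv v (i : ℕ) := by
        have hxeq : v i = ∑ j : Fin n,
            (if hj : (j : ℕ) < (i : ℕ) + 1 then c i ⟨(j : ℕ), hj⟩ else 0) • b j := by
          rw [← hc i, sum_castLE i.isLt b (c i)]
        rw [hxeq]
        apply Submodule.sum_mem
        intro j _
        by_cases hj : (j : ℕ) < (i : ℕ)
        · exact zsmul_mem (Vv_mono v hj (hbjV j)) _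
        · rcases Nat.eq_or_lt_of_le (Nat.le_of_not_lt hj) with heq | hlt
          · have hji : j = i := Fin.ext heq.symm
            subst hji
            have h0' : (if hj : ((j : Fin n) : ℕ) < (j : ℕ) + 1 then c j ⟨(j : ℕ), hj⟩ else 0)
                = 0 := h0
            rw [h0', zero_smul]
            exact zero_mem _
          · rw [dif_neg (by omega), zero_smul]
            exact zero_mem _
      exact hvind.notMem_span_image (by simp) hviV
    · intro i j hij
      exact dif_neg (by rw [Fin.lt_def] at hij; omega)
  · -- part 2
    intro i cc
    apply hbmin i
    apply Submodule.sum_mem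
    intro j hj
    rw [Finset.mem_filter] at hj
    exact Submodule.smul_mem _ (cc j) (Submodule.subset_span
      (⟨j, hj.2, rfl⟩ : b j ∈ b '' {l : Fin n | (l : ℕ) < (i : ℕ)}))
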